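/- Let K be a real m×n matrix, let G : ℝⁿ → ℝ and F* : ℝᵐ → ℝ be convex, let Q : ℝⁿ → ℝ and P* : ℝᵐ → ℝ be convex and differentiable, and let D (n×n) and E (m×m) be symmetric positive definite matrices such that ⟨∇Q(x) − ∇Q(x'), x − x'⟩ ≥ ⟨D⁻¹(∇Q(x) − ∇Q(x')), ∇Q(x) − ∇Q(x')⟩ for all x, x' ∈ ℝⁿ and ⟨∇P*(y) − ∇P*(y'), y − y'⟩ ≥ ⟨E⁻¹(∇P*(y) − ∇P*(y')), ∇P*(y) − ∇P*(y')⟩ for all y, y' ∈ ℝᵐ. Let T (n×n) and Σ (m×m) be symmetric positive definite matrices such that T⁻¹ − D/2 and Σ⁻¹ − E/2 are positive definite and ‖(Σ⁻¹ − E/2)^{−1/2} K (T⁻¹ − D/2)^{−1/2} x‖ ≤ c‖x‖ for all x and some c < 1. Assume a saddle point exists, let (α_k) be a nondecreasing sequence in [0, α] with α < 1, and let (x^k, y^k) be preconditioned inertial primal–dual iterates. If ∑_{k≥1} α_k(⟨T⁻¹(x^k − x^{k−1}), x^k − x^{k−1}⟩ − 2⟨K(x^k − x^{k−1}), y^k −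 y^{k−1}⟩ + ⟨Σ⁻¹(y^k − y^{k−1}), y^k − y^{k−1}⟩) < ∞, then (x^k, y^k) converges to a saddle point (x*, y*). -/

import Mathlib

open scoped RealInnerProductSpace
open Filter Topology Matrix

/-- The subdifferential of a convex function. -/
def subdiff {E : Type*} [NormedAddCommGroup E] [InnerProductSpace ℝ E]
    (f : E → ℝ) (x : E) : Set E :=
  {u | ∀ z, f x + ⟪u, z - x⟫ ≤ f z}

open scoped ComplexOrder in
/-- The square root of a positive semidefinite matrix, with its definition from the
older Mathlib (removed since). -/
noncomputable def Matrix.PosSemidef.sqrt {n 𝕜 : Type*} [Fintype n] [RCLike 𝕜] [DecidableEq n]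
    {A : Matrix n n 𝕜} (hA : A.PosSemidef) : Matrix n n 𝕜 :=
  hA.1.eigenvectorUnitary.1 * diagonal ((↑) ∘ (√·) ∘ hA.1.eigenvalues) *
    (star hA.1.eigenvectorUnitary : Matrix n n 𝕜)

section Stmt13Aux
open Matrix

lemma Matrix.PosSemidef.sqrt_mul_self {p : ℕ} {A : Matrix (Fin p) (Fin p) ℝ}
    (hA : A.PosSemidef) : hA.sqrt * hA.sqrt = A := by
  conv_rhs => rw [hA.1.spectral_theorem, Unitary.conjStarAlgAut_apply]
  simp only [Matrix.PosSemidef.sqrt]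
  rw [show ∀ a b c d e f : Matrix (Fin p) (Fin p) ℝ, a * b * c * (d * e * f)
      = a * b * (c * d) * e * f from fun a b c d e f => by simp only [Matrix.mul_assoc],
    Unitary.coe_star_mul_self, Matrix.mul_one,
    _root_.mul_assoc (hA.1.eigenvectorUnitary : Matrix (Fin p) (Fin p) ℝ) (diagonal _) (diagonal _),
    diagonal_mul_diagonal]
  congr 3
  funext i
  simp [Real.mul_self_sqrt (hA.eigenvalues_nonneg i)]

lemma Matrix.PosSemidef.posSemidef_sqrt {p : ℕ} {A : Matrix (Fin p) (Fin p) ℝ}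
    (hA : A.PosSemidef) : hA.sqrt.PosSemidef := by
  have h := (PosSemidef.diagonal (d := (RCLike.ofReal ∘ (√·) ∘ hA.1.eigenvalues : Fin p → ℝ))
    (fun i => by simp [Real.sqrt_nonneg])).mul_mul_conjTranspose_same
    (hA.1.eigenvectorUnitary : Matrix (Fin p) (Fin p) ℝ)
  exact h


lemma tEL_transpose_inner {p q : ℕ} (A : Matrix (Fin q) (Fin p) ℝ)
    (v : EuclideanSpace ℝ (Fin q)) (u : EuclideanSpace ℝ (Fin p)) :
    ⟪Matrix.toEuclideanLin Aᵀ v, u⟫ = ⟪Matrix.toEuclideanLin A u, v⟫ := by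
  rw [← Matrix.conjTranspose_eq_transpose_of_trivial,
    Matrix.toEuclideanLin_conjTranspose_eq_adjoint, LinearMap.adjoint_inner_left,
    real_inner_comm]

lemma tEL_symm_inner {p : ℕ} {A : Matrix (Fin p) (Fin p) ℝ} (hA : A.IsHermitian)
    (u v : EuclideanSpace ℝ (Fin p)) :
    ⟪Matrix.toEuclideanLin A u, v⟫ = ⟪Matrix.toEuclideanLin A v, u⟫ := by
  conv_lhs => rw [← hA.eq, Matrix.conjTranspose_eq_transpose_of_trivial, tEL_transpose_inner]

lemma tEL_mul {p q r : ℕ} (A : Matrix (Fin r) (Fin q) ℝ) (B : Matrix (Fin q) (Fin p) ℝ)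
    (u : EuclideanSpace ℝ (Fin p)) :
    Matrix.toEuclideanLin (A*B) u = Matrix.toEuclideanLin A (Matrix.toEuclideanLin B u) := by
  simp [Matrix.toEuclideanLin_apply, Matrix.mulVec_mulVec]

lemma tEL_sqrt_sq {p : ℕ} {A : Matrix (Fin p) (Fin p) ℝ} (hA : A.PosSemidef)
    (u : EuclideanSpace ℝ (Fin p)) :
    ⟪Matrix.toEuclideanLin A u, u⟫ = ‖Matrix.toEuclideanLin hA.sqrt u‖^2 := by
  conv_lhs => rw [← hA.sqrt_mul_self, tEL_mul, tEL_symm_inner hA.posSemidef_sqrt.1]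
  rw [real_inner_comm, real_inner_self_eq_norm_sq]

lemma tEL_psd_nonneg {p : ℕ} {A : Matrix (Fin p) (Fin p) ℝ} (hA : A.PosSemidef)
    (u : EuclideanSpace ℝ (Fin p)) : 0 ≤ ⟪Matrix.toEuclideanLin A u, u⟫ := by
  rw [tEL_sqrt_sq hA]; positivity

lemma tEL_opbound {p q : ℕ} (A : Matrix (Fin q) (Fin p) ℝ) :
    ∃ C : ℝ, 0 < C ∧ ∀ u : EuclideanSpace ℝ (Fin p), ‖Matrix.toEuclideanLin A u‖ ≤ C * ‖u‖ := by
  set L := LinearMap.toContinuousLinearMap (Matrix.toEuclideanLin A)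
  refine ⟨‖L‖ + 1, by positivity, fun u => ?_⟩
  calc ‖Matrix.toEuclideanLin A u‖ = ‖L u‖ := rfl
  _ ≤ ‖L‖ * ‖u‖ := L.le_opNorm u
  _ ≤ (‖L‖+1) * ‖u‖ := by nlinarith [norm_nonneg u, norm_nonneg L]

lemma sqrt_det_isUnit {p : ℕ} {A : Matrix (Fin p) (Fin p) ℝ} (hA : A.PosDef) :
    IsUnit hA.posSemidef.sqrt.det := by
  have h : hA.posSemidef.sqrt.det * hA.posSemidef.sqrt.det = A.det := by
    rw [← Matrix.det_mul, hA.posSemidef.sqrt_mul_self]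
  refine isUnit_iff_ne_zero.2 (fun h0 => ?_)
  rw [h0, mul_zero] at h; exact hA.det_pos.ne' h.symm

lemma posdef_lower {p : ℕ} {A : Matrix (Fin p) (Fin p) ℝ} (hA : A.PosDef) :
    ∃ ε > (0:ℝ), ∀ u : EuclideanSpace ℝ (Fin p),
      ε * ‖u‖^2 ≤ ‖Matrix.toEuclideanLin hA.posSemidef.sqrt u‖^2 := by
  set B := hA.posSemidef.sqrt with hB
  have hdet : IsUnit B.det := sqrt_det_isUnit hA
  obtain ⟨C2, hC2, hC2b⟩ := tEL_opbound B⁻¹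
  refine ⟨(1/C2)^2, by positivity, fun u => ?_⟩
  have hid : u = Matrix.toEuclideanLin B⁻¹ (Matrix.toEuclideanLin B u) := by
    rw [← tEL_mul, Matrix.nonsing_inv_mul _ hdet]
    simp [Matrix.toEuclideanLin_apply]
  have h2 : ‖u‖ ≤ C2 * ‖Matrix.toEuclideanLin B u‖ := by
    conv_lhs => rw [hid]
    exact hC2b _
  have h3 : (1/C2) * ‖u‖ ≤ ‖Matrix.toEuclideanLin B u‖ := by
    rw [div_mul_eq_mul_div, div_le_iff₀ hC2]; linarith
  calc (1/C2)^2 * ‖u‖^2 = ((1/C2)*‖u‖)^2 := by ring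
  _ ≤ ‖Matrix.toEuclideanLin B u‖^2 := pow_le_pow_left₀ (by positivity) h3 2

lemma posdef_inner_lower {p : ℕ} {A : Matrix (Fin p) (Fin p) ℝ} (hA : A.PosDef) :
    ∃ ε > (0:ℝ), ∀ u : EuclideanSpace ℝ (Fin p),
      ε * ‖u‖^2 ≤ ⟪Matrix.toEuclideanLin A u, u⟫ := by
  obtain ⟨ε, hε, hb⟩ := posdef_lower hA
  exact ⟨ε, hε, fun u => by rw [tEL_sqrt_sq hA.posSemidef]; exact hb u⟩

lemma dot_self_sqrt {p : ℕ} (w : Fin p → ℝ) :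
    Real.sqrt (w ⬝ᵥ w) = ‖(WithLp.equiv 2 (Fin p → ℝ)).symm w‖ := by
  have : (w ⬝ᵥ w) = ⟪(WithLp.equiv 2 (Fin p → ℝ)).symm w, (WithLp.equiv 2 (Fin p → ℝ)).symm w⟫ := by
    rw [real_inner_comm]
    simp [PiLp.inner_apply, dotProduct, mul_comm]
    rw [EuclideanSpace.norm_sq_eq]; simp [sq]
  rw [this, real_inner_self_eq_norm_sq, Real.sqrt_sq (norm_nonneg _)]

lemma K_bound {n m : ℕ} (Kmat : Matrix (Fin m) (Fin n) ℝ)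
    {ST : Matrix (Fin n) (Fin n) ℝ} {SE : Matrix (Fin m) (Fin m) ℝ}
    (hST : ST.PosDef) (hSE : SE.PosDef) {c : ℝ}
    (hc : ∀ x : Fin n → ℝ,
      Real.sqrt (((((hSE.posSemidef.sqrt)⁻¹ * Kmat * (hST.posSemidef.sqrt)⁻¹) *ᵥ x) ⬝ᵥ
        ((((hSE.posSemidef.sqrt)⁻¹ * Kmat * (hST.posSemidef.sqrt)⁻¹) *ᵥ x))))
        ≤ c * Real.sqrt (x ⬝ᵥ x))
    (u : EuclideanSpace ℝ (Fin n)) (v : EuclideanSpace ℝ (Fin m)) :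
    |⟪Matrix.toEuclideanLin Kmat u, v⟫| ≤
      c * ‖Matrix.toEuclideanLin hST.posSemidef.sqrt u‖
        * ‖Matrix.toEuclideanLin hSE.posSemidef.sqrt v‖ := by
  have hSTdet := sqrt_det_isUnit hST
  have hSEdet := sqrt_det_isUnit hSE
  set St := hST.posSemidef.sqrt with hSt
  set Se := hSE.posSemidef.sqrt with hSe
  set R := Se⁻¹ * Kmat * St⁻¹ with hR
  set a := Matrix.toEuclideanLin St u with ha
  have key : ‖Matrix.toEuclideanLin (Se⁻¹ * Kmat) u‖ ≤ c * ‖a‖ := by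
    have h1 : Matrix.toEuclideanLin R a = Matrix.toEuclideanLin (Se⁻¹ * Kmat) u := by
      rw [ha, ← tEL_mul]
      congr 1
      rw [hR, Matrix.mul_assoc (Se⁻¹ * Kmat), Matrix.nonsing_inv_mul _ hSTdet, Matrix.mul_one]
    have h2 := hc (WithLp.equiv 2 (Fin n → ℝ) a)
    have h3 : Matrix.toEuclideanLin R a
        = (WithLp.equiv 2 (Fin m → ℝ)).symm (R *ᵥ (WithLp.equiv 2 (Fin n → ℝ) a)) := rfl
    rw [dot_self_sqrt, dot_self_sqrt, ← h3, h1] at h2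
    simpa using h2
  have hrep : ⟪Matrix.toEuclideanLin Kmat u, v⟫
      = ⟪Matrix.toEuclideanLin (Se⁻¹ * Kmat) u, Matrix.toEuclideanLin Se v⟫ := by
    have h4 : Kmat = Se * (Se⁻¹ * Kmat) := by
      rw [← Matrix.mul_assoc, Matrix.mul_nonsing_inv _ hSEdet, Matrix.one_mul]
    conv_lhs => rw [h4, tEL_mul]
    rw [tEL_symm_inner hSE.posSemidef.posSemidef_sqrt.1, real_inner_comm]
  rw [hrep]
  calc |⟪Matrix.toEuclideanLin (Se⁻¹ * Kmat) u, Matrix.toEuclideanLin Se v⟫|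
      ≤ ‖Matrix.toEuclideanLin (Se⁻¹ * Kmat) u‖ * ‖Matrix.toEuclideanLin Se v‖ :=
        abs_real_inner_le_norm _ _
  _ ≤ (c * ‖a‖) * ‖Matrix.toEuclideanLin Se v‖ :=
        mul_le_mul_of_nonneg_right key (norm_nonneg _)
  _ = c * ‖Matrix.toEuclideanLin St u‖ * ‖Matrix.toEuclideanLin Se v‖ := by rw [ha]

/-- the M-quadratic form -/
noncomputable def MFq {n m : ℕ} (T' : Matrix (Fin n) (Fin n) ℝ) (S' : Matrix (Fin m) (Fin m) ℝ)
    (K : Matrix (Fin m) (Fin n) ℝ)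
    (u : EuclideanSpace ℝ (Fin n)) (v : EuclideanSpace ℝ (Fin m)) : ℝ :=
  ⟪Matrix.toEuclideanLin T' u, u⟫ - 2*⟪Matrix.toEuclideanLin K u, v⟫
    + ⟪Matrix.toEuclideanLin S' v, v⟫

lemma key_ineq {n m : ℕ} (T' D' : Matrix (Fin n) (Fin n) ℝ) (S' E' : Matrix (Fin m) (Fin m) ℝ)
    (K : Matrix (Fin m) (Fin n) ℝ)
    (hT' : T'.IsHermitian) (hS' : S'.IsHermitian)
    (a b gq : EuclideanSpace ℝ (Fin n)) (c d gp : EuclideanSpace ℝ (Fin m))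
    (h1 : 0 ≤ ⟪Matrix.toEuclideanLin T' (a-b) - gq - Matrix.toEuclideanLin Kᵀ c, b⟫)
    (h2 : 0 ≤ ⟪Matrix.toEuclideanLin S' (c-d) - gp + Matrix.toEuclideanLin K ((2:ℝ)•b - a), d⟫)
    (h3 : -(1/4) * ⟪Matrix.toEuclideanLin D' (a-b), a-b⟫ ≤ ⟪gq, b⟫)
    (h4 : -(1/4) * ⟪Matrix.toEuclideanLin E' (c-d), c-d⟫ ≤ ⟪gp, d⟫) :
    MFq T' S' K b d ≤ MFq T' S' K a c
      - (MFq T' S' K (a-b) (c-d) - (1/2)*⟪Matrix.toEuclideanLin D' (a-b), a-b⟫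
          - (1/2)*⟪Matrix.toEuclideanLin E' (c-d), c-d⟫) := by
  have hTsym := tEL_symm_inner hT' a b
  have hSsym := tEL_symm_inner hS' c d
  have hKT := tEL_transpose_inner K c b
  simp only [MFq, map_sub, LinearMap.map_smul, inner_sub_left, inner_sub_right, inner_add_left,
    inner_add_right, real_inner_smul_left, smul_eq_mul, LinearMap.map_smul] at *
  linarith

lemma MFq_expand {n m : ℕ} (T' : Matrix (Fin n) (Fin n) ℝ) (S' : Matrix (Fin m) (Fin m) ℝ)
    (K : Matrix (Fin m) (Fin n) ℝ) (hT' : T'.IsHermitian) (hS' : S'.IsHermitian)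
    (α : ℝ) (p q : EuclideanSpace ℝ (Fin n)) (r s : EuclideanSpace ℝ (Fin m)) :
    MFq T' S' K (p + α•q) (r + α•s)
      = (1+α) * MFq T' S' K p r - α * MFq T' S' K (p-q) (r-s) + α*(1+α) * MFq T' S' K q s := by
  have hTsym := tEL_symm_inner hT' p q
  have hSsym := tEL_symm_inner hS' r s
  simp only [MFq, map_sub, map_add, LinearMap.map_smul, inner_sub_left, inner_sub_right,
    inner_add_left, inner_add_right, real_inner_smul_left, real_inner_smul_right, smul_eq_mul]
  rw [hTsym.symm, hSsym.symm]
  ring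

lemma MFq_lower {n m : ℕ} (K : Matrix (Fin m) (Fin n) ℝ)
    {ST : Matrix (Fin n) (Fin n) ℝ} {SE : Matrix (Fin m) (Fin m) ℝ}
    (hST : ST.PosDef) (hSE : SE.PosDef) {c : ℝ} (hc0 : 0 ≤ c) (hc1 : c < 1)
    (hK : ∀ u v, |⟪Matrix.toEuclideanLin K u, v⟫|
      ≤ c * ‖Matrix.toEuclideanLin hST.posSemidef.sqrt u‖
          * ‖Matrix.toEuclideanLin hSE.posSemidef.sqrt v‖) :
    ∃ δ > (0:ℝ), ∀ u v, δ * (‖u‖^2 + ‖v‖^2) ≤ MFq ST SE K u v := by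
  obtain ⟨εt, hεt, hεtb⟩ := posdef_lower hST
  obtain ⟨εe, hεe, hεeb⟩ := posdef_lower hSE
  refine ⟨(1-c) * min εt εe, mul_pos (by linarith) (lt_min hεt hεe), fun u v => ?_⟩
  set a := ‖Matrix.toEuclideanLin hST.posSemidef.sqrt u‖ with ha
  set b := ‖Matrix.toEuclideanLin hSE.posSemidef.sqrt v‖ with hb
  have h1 : MFq ST SE K u v = a^2 - 2*⟪Matrix.toEuclideanLin K u, v⟫ + b^2 := by
    rw [MFq, tEL_sqrt_sq hST.posSemidef, tEL_sqrt_sq hSE.posSemidef]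
  have h2 := (abs_le.1 (hK u v)).2
  have h3 : (1-c)*(a^2+b^2) ≤ MFq ST SE K u v := by
    nlinarith [sq_nonneg (a-b), mul_nonneg hc0 (sq_nonneg (a-b))]
  have h4 : εt * ‖u‖^2 ≤ a^2 := hεtb u
  have h5 : εe * ‖v‖^2 ≤ b^2 := hεeb v
  have h6 : min εt εe * (‖u‖^2 + ‖v‖^2) ≤ a^2 + b^2 := by
    have := min_le_left εt εe; have := min_le_right εt εe
    nlinarith [sq_nonneg ‖u‖, sq_nonneg ‖v‖]
  nlinarith [sq_nonneg ‖u‖, sq_nonneg ‖v‖]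

lemma MFq_upper {n m : ℕ} (T' : Matrix (Fin n) (Fin n) ℝ) (S' : Matrix (Fin m) (Fin m) ℝ)
    (K : Matrix (Fin m) (Fin n) ℝ) :
    ∃ C > (0:ℝ), ∀ u v, MFq T' S' K u v ≤ C * (‖u‖^2 + ‖v‖^2) := by
  obtain ⟨Ct, hCt, hCtb⟩ := tEL_opbound T'
  obtain ⟨Ce, hCe, hCeb⟩ := tEL_opbound S'
  obtain ⟨Ck, hCk, hCkb⟩ := tEL_opbound K
  refine ⟨Ct + Ce + Ck, by positivity, fun u v => ?_⟩
  have h1 : ⟪Matrix.toEuclideanLin T' u, u⟫ ≤ Ct * ‖u‖^2 := by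
    calc ⟪Matrix.toEuclideanLin T' u, u⟫ ≤ ‖Matrix.toEuclideanLin T' u‖ * ‖u‖ :=
          real_inner_le_norm _ _
    _ ≤ Ct * ‖u‖ * ‖u‖ := by nlinarith [norm_nonneg u, hCtb u]
    _ = Ct * ‖u‖^2 := by ring
  have h2 : ⟪Matrix.toEuclideanLin S' v, v⟫ ≤ Ce * ‖v‖^2 := by
    calc ⟪Matrix.toEuclideanLin S' v, v⟫ ≤ ‖Matrix.toEuclideanLin S' v‖ * ‖v‖ :=
          real_inner_le_norm _ _
    _ ≤ Ce * ‖v‖ * ‖v‖ := by nlinarith [norm_nonneg v, hCeb v]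
    _ = Ce * ‖v‖^2 := by ring
  have h3 : -2*⟪Matrix.toEuclideanLin K u, v⟫ ≤ Ck * (‖u‖^2 + ‖v‖^2) := by
    have habs := abs_real_inner_le_norm (Matrix.toEuclideanLin K u) v
    have h4 : ‖Matrix.toEuclideanLin K u‖ * ‖v‖ ≤ Ck * ‖u‖ * ‖v‖ := by
      nlinarith [norm_nonneg v, hCkb u]
    have h5 : -⟪Matrix.toEuclideanLin K u, v⟫ ≤ Ck * ‖u‖ * ‖v‖ := by
      have := (abs_le.1 habs).1; linarith
    nlinarith [sq_nonneg (‖u‖ - ‖v‖), norm_nonneg u, norm_nonneg v]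
  simp only [MFq]; nlinarith [sq_nonneg ‖u‖, sq_nonneg ‖v‖]

lemma coco_bound {p : ℕ} {Dm : Matrix (Fin p) (Fin p) ℝ} (hD : Dm.PosDef)
    (g w : EuclideanSpace ℝ (Fin p)) :
    ⟪g, w⟫ - (1/4)*⟪Matrix.toEuclideanLin Dm w, w⟫ ≤ ⟪Matrix.toEuclideanLin Dm⁻¹ g, g⟫ := by
  have hdet : IsUnit Dm.det := isUnit_iff_ne_zero.2 hD.det_pos.ne'
  have hinv : Matrix.toEuclideanLin Dm⁻¹ (Matrix.toEuclideanLin Dm w) = w := by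
    rw [← tEL_mul, Matrix.nonsing_inv_mul _ hdet]
    simp [Matrix.toEuclideanLin_apply]
  have h0 : 0 ≤ ⟪Matrix.toEuclideanLin Dm⁻¹ (g - (1/2:ℝ)•(Matrix.toEuclideanLin Dm w)),
      g - (1/2:ℝ)•(Matrix.toEuclideanLin Dm w)⟫ := tEL_psd_nonneg hD.inv.posSemidef _
  have e2 : ⟪Matrix.toEuclideanLin Dm⁻¹ g, Matrix.toEuclideanLin Dm w⟫ = ⟪w, g⟫ := by
    rw [tEL_symm_inner hD.inv.1, hinv]
  have e3 : ⟪Matrix.toEuclideanLin Dm⁻¹ (Matrix.toEuclideanLin Dm w),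
      Matrix.toEuclideanLin Dm w⟫ = ⟪Matrix.toEuclideanLin Dm w, w⟫ := by
    rw [hinv, real_inner_comm]
  have e4 : ⟪w, g⟫ = ⟪g, w⟫ := real_inner_comm _ _
  simp only [map_sub, LinearMap.map_smul, inner_sub_left, inner_sub_right,
    real_inner_smul_left, real_inner_smul_right, smul_eq_mul, hinv, e2, e3, e4] at h0
  linarith [real_inner_comm w (Matrix.toEuclideanLin Dm w)]

lemma quasi_fejer (φ s r : ℕ → ℝ) (α : ℝ) (hα0 : 0 ≤ α) (hα1 : α < 1)
    (hφ0 : ∀ k, 0 ≤ φ k) (hs0 : ∀ k, 0 ≤ s k) (hr0 : ∀ k, 0 ≤ r k)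
    (hs : Summable s)
    (hrec : ∀ k, φ (k+1) + r k ≤ φ k + α * max (φ k - φ (k-1)) 0 + s k) :
    (∃ L, Tendsto φ atTop (𝓝 L)) ∧ Summable r := by
  set θ : ℕ → ℝ := fun k => max (φ k - φ (k-1)) 0 with hθdef
  have hθ0 : ∀ k, 0 ≤ θ k := fun k => le_max_right _ _
  have hθz : θ 0 = 0 := by simp [hθdef]
  have h1α : (0:ℝ) < 1 - α := by linarith
  have hθrec : ∀ k, θ (k+1) ≤ α * θ k + s k := by
    intro k
    have h1 := hrec k
    have hrk := hr0 k
    have h2 : φ (k+1) - φ k ≤ α * θ k + s k := by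
      simp only [hθdef] at h1 ⊢; linarith
    have h3 : (0:ℝ) ≤ α * θ k + s k := by
      have := hθ0 k; have := hs0 k; positivity
    have hk1 : (k+1) - 1 = k := by omega
    simp only [hθdef, hk1]
    exact max_le (by linarith) h3
  have hθsum : Summable θ := by
    apply summable_of_sum_range_le hθ0 (c := (∑' k, s k) / (1 - α))
    intro N
    induction N with
    | zero => simp; exact div_nonneg (tsum_nonneg hs0) (le_of_lt h1α)
    | succ N ih =>
      have e1 : ∑ k ∈ Finset.range (N+1), θ k = ∑ k ∈ Finset.range N, θ (k+1) + θ 0 :=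
        Finset.sum_range_succ' θ N
      have e2 : ∑ k ∈ Finset.range N, θ (k+1)
          ≤ α * ∑ k ∈ Finset.range N, θ k + ∑ k ∈ Finset.range N, s k := by
        rw [Finset.mul_sum, ← Finset.sum_add_distrib]
        exact Finset.sum_le_sum (fun k _ => hθrec k)
      have e4 : ∑ k ∈ Finset.range N, s k ≤ ∑' k, s k :=
        Summable.sum_le_tsum _ (fun k _ => hs0 k) hs
      have e5 : α * ∑ k ∈ Finset.range N, θ k ≤ α * ((∑' k, s k) / (1-α)) :=
        mul_le_mul_of_nonneg_left ih hα0
      rw [e1, hθz, add_zero]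
      have h : ∑ k ∈ Finset.range N, θ (k+1) ≤ α * ((∑' k, s k)/(1-α)) + ∑' k, s k := by
        linarith
      calc ∑ k ∈ Finset.range N, θ (k+1) ≤ α * ((∑' k, s k)/(1-α)) + ∑' k, s k := h
      _ = (∑' k, s k)/(1-α) := by field_simp; ring
  set w : ℕ → ℝ := fun k => α * θ k + s k with hwdef
  have hw0 : ∀ k, 0 ≤ w k := fun k => by have := hθ0 k; have := hs0 k; positivity
  have hwsum : Summable w := (hθsum.mul_left α).add hs
  set σf : ℕ → ℝ := fun N => ∑ k ∈ Finset.range N, w k with hσdef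
  have hσle : ∀ N, σf N ≤ ∑' k, w k := fun N =>
    Summable.sum_le_tsum _ (fun k _ => hw0 k) hwsum
  have hφstep : ∀ k, φ (k+1) ≤ φ k + w k := by
    intro k; have := hrec k; have := hr0 k; simp only [hwdef, hθdef] at *; linarith
  set g : ℕ → ℝ := fun k => φ k - σf k with hgdef
  have hganti : Antitone g := by
    apply antitone_nat_of_succ_le
    intro k
    have hss : σf (k+1) = σf k + w k := Finset.sum_range_succ w k
    simp only [hgdef, hss]
    have := hφstep k; linarith
  have hgbdd : BddBelow (Set.range g) := by
    refine ⟨-(∑' k, w k), fun z hz => ?_⟩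
    obtain ⟨k, rfl⟩ := hz
    have := hφ0 k; have := hσle k
    simp only [hgdef]; linarith
  have hgconv : Tendsto g atTop (𝓝 (⨅ k, g k)) := tendsto_atTop_ciInf hganti hgbdd
  have hσconv : Tendsto σf atTop (𝓝 (∑' k, w k)) := hwsum.hasSum.tendsto_sum_nat
  constructor
  · refine ⟨(⨅ k, g k) + ∑' k, w k, ?_⟩
    have hφeq : φ = fun k => g k + σf k := by funext k; simp [hgdef]
    rw [hφeq]
    exact hgconv.add hσconv
  · apply summable_of_sum_range_le hr0 (c := φ 0 + ∑' k, w k)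
    intro N
    have key : ∀ N, ∑ k ∈ Finset.range N, r k ≤ φ 0 - φ N + σf N := by
      intro N
      induction N with
      | zero => simp [hσdef]
      | succ N ih =>
        have h1 : r N ≤ φ N - φ (N+1) + w N := by
          have := hrec N; simp only [hwdef, hθdef] at *; linarith
        have h2 : σf (N+1) = σf N + w N := Finset.sum_range_succ w N
        rw [Finset.sum_range_succ, h2]; linarith
    have := key N; have := hφ0 N; have := hσle N; linarith

lemma vanish_rec (a b : ℕ → ℝ) (α : ℝ) (hα0 : 0 ≤ α) (hα1 : α < 1)
    (ha : ∀ k, 0 ≤ a k) (hb : Tendsto b atTop (𝓝 0)) (hb0 : ∀ k, 0 ≤ b k)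
    (hrec : ∀ k, a (k+1) ≤ α * a k + b k) : Tendsto a atTop (𝓝 0) := by
  rw [Metric.tendsto_atTop]
  intro ε hε
  have h1α : (0:ℝ) < 1 - α := by linarith
  obtain ⟨N, hN⟩ := (Metric.tendsto_atTop.1 hb) ((1-α)*ε/2) (by positivity)
  have hbN : ∀ k ≥ N, b k ≤ (1-α)*ε/2 := by
    intro k hk
    have := hN k hk
    rw [Real.dist_eq, abs_sub_comm, abs_of_nonpos (by linarith [hb0 k])] at this
    linarith
  have key : ∀ j, a (N + j) ≤ α^j * a N + ε/2 := by
    intro j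
    induction j with
    | zero => simp; linarith [hε]
    | succ j ih =>
      have h1 : a (N + j + 1) ≤ α * a (N + j) + b (N + j) := hrec (N + j)
      have h2 : b (N + j) ≤ (1-α)*ε/2 := hbN _ (by omega)
      have h3 : α * a (N+j) ≤ α * (α^j * a N + ε/2) := mul_le_mul_of_nonneg_left ih hα0
      have hNj : N + (j+1) = N + j + 1 := by omega
      rw [hNj, pow_succ]
      nlinarith
  have hpow : Tendsto (fun j => α^j * a N) atTop (𝓝 0) := by
    simpa using (tendsto_pow_atTop_nhds_zero_of_lt_one hα0 hα1).mul_const (a N)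
  obtain ⟨J, hJ⟩ := (Metric.tendsto_atTop.1 hpow) (ε/2) (by positivity)
  refine ⟨N + J, fun k hk => ?_⟩
  have hj : ∃ j, k = N + j ∧ j ≥ J := ⟨k - N, by omega, by omega⟩
  obtain ⟨j, rfl, hjJ⟩ := hj
  have h4 := hJ j hjJ
  rw [Real.dist_eq, sub_zero] at h4 ⊢
  have h5 : α^j * a N ≤ |α^j * a N| := le_abs_self _
  rw [abs_of_nonneg (ha _)]
  have := key j
  linarith

end Stmt13Aux

/-- monotonicity of the subdifferential -/
lemma subdiff_mono {EE : Type*} [NormedAddCommGroup EE] [InnerProductSpace ℝ EE]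
    {f : EE → ℝ} {u v xx zz : EE} (hu : u ∈ subdiff f xx) (hv : v ∈ subdiff f zz) :
    0 ≤ ⟪u - v, xx - zz⟫ := by
  have h1 := hu zz
  have h2 := hv xx
  have e1 : ⟪u, zz - xx⟫ = -⟪u, xx - zz⟫ := by rw [← inner_neg_right, neg_sub]
  rw [inner_sub_left]
  rw [e1] at h1
  linarith


set_option maxHeartbeats 1000000

/-- convergence of the preconditioned inertial primal–dual algorithm with
symmetric positive definite step-size matrices `T`, `Σ`, co-coercivity matrices `D`, `E`,
and preconditioned norm condition `‖(Σ⁻¹ − E/2)^{−1/2} K (T⁻¹ − D/2)^{−1/2}‖ ≤ c < 1`.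
The convention `(x⁻¹, y⁻¹) = (x⁰, y⁰)` is encoded via truncated subtraction. -/
theorem stmt13 {n m : ℕ}
    (Kmat : Matrix (Fin m) (Fin n) ℝ)
    (G Q : EuclideanSpace ℝ (Fin n) → ℝ) (Fs Ps : EuclideanSpace ℝ (Fin m) → ℝ)
    (hG : ConvexOn ℝ Set.univ G) (hFs : ConvexOn ℝ Set.univ Fs)
    (hQ : ConvexOn ℝ Set.univ Q) (hPs : ConvexOn ℝ Set.univ Ps)
    (gQ : EuclideanSpace ℝ (Fin n) → EuclideanSpace ℝ (Fin n))
    (gP : EuclideanSpace ℝ (Fin m) → EuclideanSpace ℝ (Fin m))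
    (hgQ : ∀ x, HasGradientAt Q (gQ x) x) (hgP : ∀ y, HasGradientAt Ps (gP y) y)
    (D : Matrix (Fin n) (Fin n) ℝ) (E : Matrix (Fin m) (Fin m) ℝ)
    (hD : D.PosDef) (hE : E.PosDef)
    -- ∇Q is co-coercive w.r.t. D⁻¹ and ∇P* is co-coercive w.r.t. E⁻¹
    (hQcoco : ∀ x x' : EuclideanSpace ℝ (Fin n),
      ⟪Matrix.toEuclideanLin D⁻¹ (gQ x - gQ x'), gQ x - gQ x'⟫ ≤ ⟪gQ x - gQ x', x - x'⟫)
    (hPcoco : ∀ y y' : EuclideanSpace ℝ (Fin m),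
      ⟪Matrix.toEuclideanLin E⁻¹ (gP y - gP y'), gP y - gP y'⟫ ≤ ⟪gP y - gP y', y - y'⟫)
    (T : Matrix (Fin n) (Fin n) ℝ) (Sig : Matrix (Fin m) (Fin m) ℝ)
    (hT : T.PosDef) (hSig : Sig.PosDef)
    (hTD : (T⁻¹ - (1/2 : ℝ) • D).PosDef) (hSE : (Sig⁻¹ - (1/2 : ℝ) • E).PosDef)
    -- ‖(Σ⁻¹ − E/2)^{−1/2} K (T⁻¹ − D/2)^{−1/2}‖ ≤ c < 1 (Euclidean norms via dot products)
    (hKnorm : ∃ c < (1:ℝ), ∀ x : Fin n → ℝ,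
      Real.sqrt
          (((((hSE.posSemidef.sqrt)⁻¹ * Kmat * (hTD.posSemidef.sqrt)⁻¹) *ᵥ x) ⬝ᵥ
            ((((hSE.posSemidef.sqrt)⁻¹ * Kmat * (hTD.posSemidef.sqrt)⁻¹) *ᵥ x))))
        ≤ c * Real.sqrt (x ⬝ᵥ x))
    -- a saddle point exists
    (hsaddle : ∃ (xs : EuclideanSpace ℝ (Fin n)) (ys : EuclideanSpace ℝ (Fin m)),
      -(gQ xs + Matrix.toEuclideanLin Kmatᵀ ys) ∈ subdiff G xs ∧
      Matrix.toEuclideanLin Kmat xs - gP ys ∈ subdiff Fs ys)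
    -- (α_k) nondecreasing in [0, α] with α < 1
    (α : ℝ) (hα1 : α < 1)
    (αk : ℕ → ℝ) (hαk : ∀ k, αk k ∈ Set.Icc 0 α) (hαmono : Monotone αk)
    -- preconditioned inertial primal–dual iterates
    (x ξ : ℕ → EuclideanSpace ℝ (Fin n)) (y ζ : ℕ → EuclideanSpace ℝ (Fin m))
    (hξ : ∀ k, ξ k = x k + αk k • (x k - x (k - 1)))
    (hζ : ∀ k, ζ k = y k + αk k • (y k - y (k - 1)))
    (hxstep : ∀ k, Matrix.toEuclideanLin T⁻¹ (ξ k - x (k + 1)) - gQ (ξ k)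
        - Matrix.toEuclideanLin Kmatᵀ (ζ k) ∈ subdiff G (x (k + 1)))
    (hystep : ∀ k, Matrix.toEuclideanLin Sig⁻¹ (ζ k - y (k + 1)) - gP (ζ k)
        + Matrix.toEuclideanLin Kmat ((2:ℝ) • x (k + 1) - ξ k) ∈ subdiff Fs (y (k + 1)))
    -- summability of the inertial error term in the M-metric
    (hsum : Summable (fun k : ℕ => αk k *
      (⟪Matrix.toEuclideanLin T⁻¹ (x k - x (k - 1)), x k - x (k - 1)⟫
        - 2 * ⟪Matrix.toEuclideanLin Kmat (x k - x (k - 1)), y k - y (k - 1)⟫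
        + ⟪Matrix.toEuclideanLin Sig⁻¹ (y k - y (k - 1)), y k - y (k - 1)⟫))) :
    ∃ (xs : EuclideanSpace ℝ (Fin n)) (ys : EuclideanSpace ℝ (Fin m)),
      (-(gQ xs + Matrix.toEuclideanLin Kmatᵀ ys) ∈ subdiff G xs ∧
        Matrix.toEuclideanLin Kmat xs - gP ys ∈ subdiff Fs ys) ∧
      Tendsto x atTop (𝓝 xs) ∧ Tendsto y atTop (𝓝 ys) := by
  -- basic positivity facts
  have hα0 : 0 ≤ α := le_trans (hαk 0).1 (hαk 0).2
  have hTinv : (T⁻¹).PosDef := hT.inv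
  have hSiginv : (Sig⁻¹).PosDef := hSig.inv
  -- the K norm bound with nonnegative constant
  obtain ⟨c0, hc0lt, hc0b⟩ := hKnorm
  set c : ℝ := max c0 0 with hc
  have hc0 : 0 ≤ c := le_max_right _ _
  have hc1 : c < 1 := max_lt hc0lt one_pos
  have hKb : ∀ u v, |⟪Matrix.toEuclideanLin Kmat u, v⟫|
      ≤ c * ‖Matrix.toEuclideanLin hTD.posSemidef.sqrt u‖
          * ‖Matrix.toEuclideanLin hSE.posSemidef.sqrt v‖ := by
    apply K_bound Kmat hTD hSE
    intro xv
    calc Real.sqrt _ ≤ c0 * Real.sqrt (xv ⬝ᵥ xv) := hc0b xv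
    _ ≤ c * Real.sqrt (xv ⬝ᵥ xv) :=
        mul_le_mul_of_nonneg_right (le_max_left _ _) (Real.sqrt_nonneg _)
  -- the two quadratic forms
  obtain ⟨δ, hδ, hδb⟩ := MFq_lower Kmat hTD hSE hc0 hc1 hKb
  obtain ⟨C, hC, hCb⟩ := MFq_upper T⁻¹ Sig⁻¹ Kmat
  -- splitting M = M_S + (1/2) diag(D,E)
  have hsplit : ∀ u v, MFq T⁻¹ Sig⁻¹ Kmat u v
      = MFq (T⁻¹ - (1/2:ℝ)•D) (Sig⁻¹ - (1/2:ℝ)•E) Kmat u v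
        + (1/2)*⟪Matrix.toEuclideanLin D u, u⟫ + (1/2)*⟪Matrix.toEuclideanLin E v, v⟫ := by
    intro u v
    simp only [MFq, map_sub, LinearEquiv.map_smul, LinearMap.sub_apply, LinearMap.smul_apply,
      inner_sub_left, real_inner_smul_left, smul_eq_mul]
    ring
  have hMF'low : ∀ u v, δ * (‖u‖^2 + ‖v‖^2) ≤ MFq T⁻¹ Sig⁻¹ Kmat u v := by
    intro u v
    rw [hsplit]
    have h1 := hδb u v
    have h2 := tEL_psd_nonneg hD.posSemidef u
    have h3 := tEL_psd_nonneg hE.posSemidef v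
    linarith
  have hMF'0 : ∀ u v, 0 ≤ MFq T⁻¹ Sig⁻¹ Kmat u v := by
    intro u v
    have := hMF'low u v
    nlinarith [sq_nonneg ‖u‖, sq_nonneg ‖v‖]
  -- the master estimate, valid for every saddle point
  have master : ∀ xs ys,
      (-(gQ xs + Matrix.toEuclideanLin Kmatᵀ ys) ∈ subdiff G xs) →
      (Matrix.toEuclideanLin Kmat xs - gP ys ∈ subdiff Fs ys) →
      (∃ L, Tendsto (fun k => MFq T⁻¹ Sig⁻¹ Kmat (x k - xs) (y k - ys)) atTop (𝓝 L)) ∧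
      Summable (fun k => MFq (T⁻¹ - (1/2:ℝ)•D) (Sig⁻¹ - (1/2:ℝ)•E) Kmat
        (ξ k - x (k+1)) (ζ k - y (k+1))) := by
    intro xs ys hsx hsy
    set φ : ℕ → ℝ := fun k => MFq T⁻¹ Sig⁻¹ Kmat (x k - xs) (y k - ys) with hφdef
    have step : ∀ k, φ (k+1)
        + MFq (T⁻¹ - (1/2:ℝ)•D) (Sig⁻¹ - (1/2:ℝ)•E) Kmat (ξ k - x (k+1)) (ζ k - y (k+1))
        ≤ φ k + αk k * (φ k - φ (k-1))
          + αk k*(1+αk k)*MFq T⁻¹ Sig⁻¹ Kmat (x k - x (k-1)) (y k - y (k-1)) := by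
      intro k
      simp only [hφdef]
      set a := ξ k - xs with ha
      set b := x (k+1) - xs with hb
      set cc := ζ k - ys with hcc
      set dd := y (k+1) - ys with hdd
      set gq := gQ (ξ k) - gQ xs with hgq
      set gp := gP (ζ k) - gP ys with hgp
      have hab : a - b = ξ k - x (k+1) := by rw [ha, hb]; abel
      have hcd : cc - dd = ζ k - y (k+1) := by rw [hcc, hdd]; abel
      have h1 : 0 ≤ ⟪Matrix.toEuclideanLin T⁻¹ (a-b) - gq - Matrix.toEuclideanLin Kmatᵀ cc, b⟫ := by
        have hm := subdiff_mono (hxstep k) hsx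
        have e1 : Matrix.toEuclideanLin T⁻¹ (a-b) - gq - Matrix.toEuclideanLin Kmatᵀ cc
            = (Matrix.toEuclideanLin T⁻¹ (ξ k - x (k+1)) - gQ (ξ k)
                - Matrix.toEuclideanLin Kmatᵀ (ζ k))
              - (-(gQ xs + Matrix.toEuclideanLin Kmatᵀ ys)) := by
          rw [hab, hgq, hcc]
          simp only [map_sub]
          abel
        rw [e1]
        exact hm
      have h2 : 0 ≤ ⟪Matrix.toEuclideanLin Sig⁻¹ (cc-dd) - gp
          + Matrix.toEuclideanLin Kmat ((2:ℝ)•b - a), dd⟫ := by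
        have hm := subdiff_mono (hystep k) hsy
        have e2 : Matrix.toEuclideanLin Sig⁻¹ (cc-dd) - gp
              + Matrix.toEuclideanLin Kmat ((2:ℝ)•b - a)
            = (Matrix.toEuclideanLin Sig⁻¹ (ζ k - y (k+1)) - gP (ζ k)
                + Matrix.toEuclideanLin Kmat ((2:ℝ)•x (k+1) - ξ k))
              - (Matrix.toEuclideanLin Kmat xs - gP ys) := by
          rw [hcd, hgp, hb, ha]
          simp only [map_sub, LinearMap.map_smul]
          module
        rw [e2]
        exact hm
      have h3 : -(1/4) * ⟪Matrix.toEuclideanLin D (a-b), a-b⟫ ≤ ⟪gq, b⟫ := by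
        have hq1 : ⟪Matrix.toEuclideanLin D⁻¹ gq, gq⟫ ≤ ⟪gq, a⟫ := hQcoco (ξ k) xs
        have hcb := coco_bound hD gq (a-b)
        have e3 : ⟪gq, a - b⟫ = ⟪gq, a⟫ - ⟪gq, b⟫ := inner_sub_right _ _ _
        linarith
      have h4 : -(1/4) * ⟪Matrix.toEuclideanLin E (cc-dd), cc-dd⟫ ≤ ⟪gp, dd⟫ := by
        have hp1 : ⟪Matrix.toEuclideanLin E⁻¹ gp, gp⟫ ≤ ⟪gp, cc⟫ := hPcoco (ζ k) ys
        have hcb := coco_bound hE gp (cc-dd)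
        have e3 : ⟪gp, cc - dd⟫ = ⟪gp, cc⟫ - ⟪gp, dd⟫ := inner_sub_right _ _ _
        linarith
      have keyk := key_ineq T⁻¹ D Sig⁻¹ E Kmat hTinv.1 hSiginv.1 a b gq cc dd gp h1 h2 h3 h4
      have hsp := hsplit (a-b) (cc-dd)
      have haexp : a = (x k - xs) + αk k • (x k - x (k-1)) := by rw [ha, hξ k]; abel
      have hcexp : cc = (y k - ys) + αk k • (y k - y (k-1)) := by rw [hcc, hζ k]; abel
      have hexp := MFq_expand T⁻¹ Sig⁻¹ Kmat hTinv.1 hSiginv.1 (αk k)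
        (x k - xs) (x k - x (k-1)) (y k - ys) (y k - y (k-1))
      have e6 : (x k - xs) - (x k - x (k-1)) = x (k-1) - xs := by abel
      have e7 : (y k - ys) - (y k - y (k-1)) = y (k-1) - ys := by abel
      rw [e6, e7, ← haexp, ← hcexp] at hexp
      rw [← hab, ← hcd]
      linarith
    have hφ0 : ∀ k, 0 ≤ φ k := fun k => hMF'0 _ _
    have hd0 : ∀ k, 0 ≤ MFq T⁻¹ Sig⁻¹ Kmat (x k - x (k-1)) (y k - y (k-1)) :=
      fun k => hMF'0 _ _
    have hssum : Summable (fun k => 2 * (αk k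
        * MFq T⁻¹ Sig⁻¹ Kmat (x k - x (k-1)) (y k - y (k-1)))) := by
      have h := hsum.mul_left 2
      simpa only [MFq] using h
    have hs0' : ∀ k, 0 ≤ 2 * (αk k * MFq T⁻¹ Sig⁻¹ Kmat (x k - x (k-1)) (y k - y (k-1))) :=
      fun k => by have := hd0 k; have := (hαk k).1; positivity
    have hr0 : ∀ k, 0 ≤ MFq (T⁻¹ - (1/2:ℝ)•D) (Sig⁻¹ - (1/2:ℝ)•E) Kmat
        (ξ k - x (k+1)) (ζ k - y (k+1)) := by
      intro k
      refine le_trans ?_ (hδb _ _)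
      positivity
    have hrec : ∀ k, φ (k+1) + MFq (T⁻¹ - (1/2:ℝ)•D) (Sig⁻¹ - (1/2:ℝ)•E) Kmat
        (ξ k - x (k+1)) (ζ k - y (k+1))
        ≤ φ k + α * max (φ k - φ (k-1)) 0
          + 2 * (αk k * MFq T⁻¹ Sig⁻¹ Kmat (x k - x (k-1)) (y k - y (k-1))) := by
      intro k
      have hstep := step k
      have hmid : αk k * (φ k - φ (k-1)) ≤ α * max (φ k - φ (k-1)) 0 := by
        rcases le_total 0 (φ k - φ (k-1)) with h|h
        · rw [max_eq_left h]
          exact mul_le_mul_of_nonneg_right (hαk k).2 h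
        · have h5 : αk k * (φ k - φ (k-1)) ≤ 0 :=
            mul_nonpos_of_nonneg_of_nonpos (hαk k).1 h
          have h6 : 0 ≤ α * max (φ k - φ (k-1)) 0 :=
            mul_nonneg hα0 (le_max_right _ _)
          linarith
      have hlast : αk k*(1+αk k)*MFq T⁻¹ Sig⁻¹ Kmat (x k - x (k-1)) (y k - y (k-1))
          ≤ 2 * (αk k * MFq T⁻¹ Sig⁻¹ Kmat (x k - x (k-1)) (y k - y (k-1))) := by
        have hprod : 0 ≤ (1 - αk k) * (αk k * MFq T⁻¹ Sig⁻¹ Kmat (x k - x (k-1)) (y k - y (k-1))) :=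
          mul_nonneg (by linarith [(hαk k).2, hα1]) (mul_nonneg (hαk k).1 (hd0 k))
        nlinarith [hprod]
      linarith
    exact quasi_fejer φ _ _ α hα0 hα1 hφ0 hs0' hr0 hssum hrec
  -- first saddle point: get summability of residuals and vanishing increments
  obtain ⟨xs0, ys0, hsx0, hsy0⟩ := hsaddle
  obtain ⟨⟨L0, hL0⟩, hrsum⟩ := master xs0 ys0 hsx0 hsy0
  have hrtend := hrsum.tendsto_atTop_zero
  have hw2 : Tendsto (fun k => ‖ξ k - x (k+1)‖^2 + ‖ζ k - y (k+1)‖^2) atTop (𝓝 0) := by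
    apply squeeze_zero (fun k => by positivity) (fun k => ?_)
      (by simpa only [zero_div] using hrtend.div_const δ)
    rw [le_div_iff₀ hδ, mul_comm]
    exact hδb _ _
  have hwx : Tendsto (fun k => ‖ξ k - x (k+1)‖) atTop (𝓝 0) := by
    have h2 : Tendsto (fun k => ‖ξ k - x (k+1)‖^2) atTop (𝓝 0) :=
      squeeze_zero (fun k => sq_nonneg _) (fun k => by nlinarith [sq_nonneg ‖ζ k - y (k+1)‖]) hw2
    have h3 := h2.sqrt
    rw [Real.sqrt_zero] at h3
    exact h3.congr (fun k => Real.sqrt_sq (norm_nonneg _))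
  have hwy : Tendsto (fun k => ‖ζ k - y (k+1)‖) atTop (𝓝 0) := by
    have h2 : Tendsto (fun k => ‖ζ k - y (k+1)‖^2) atTop (𝓝 0) :=
      squeeze_zero (fun k => sq_nonneg _) (fun k => by nlinarith [sq_nonneg ‖ξ k - x (k+1)‖]) hw2
    have h3 := h2.sqrt
    rw [Real.sqrt_zero] at h3
    exact h3.congr (fun k => Real.sqrt_sq (norm_nonneg _))
  -- increments vanish
  have hΔ : Tendsto (fun k => ‖x k - x (k-1)‖ + ‖y k - y (k-1)‖) atTop (𝓝 0) := by
    apply vanish_rec _ (fun k => ‖ξ k - x (k+1)‖ + ‖ζ k - y (k+1)‖) α hα0 hα1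
      (fun k => by positivity) (by simpa using hwx.add hwy) (fun k => by positivity)
    intro k
    have ex : x (k+1) - x ((k+1)-1) = αk k • (x k - x (k-1)) - (ξ k - x (k+1)) := by
      simp only [Nat.add_sub_cancel]
      rw [hξ k]
      abel
    have ey : y (k+1) - y ((k+1)-1) = αk k • (y k - y (k-1)) - (ζ k - y (k+1)) := by
      simp only [Nat.add_sub_cancel]
      rw [hζ k]
      abel
    have bx : ‖x (k+1) - x ((k+1)-1)‖ ≤ αk k * ‖x k - x (k-1)‖ + ‖ξ k - x (k+1)‖ := by
      rw [ex]
      refine le_trans (norm_sub_le _ _) ?_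
      rw [norm_smul, Real.norm_eq_abs, abs_of_nonneg (hαk k).1]
    have by' : ‖y (k+1) - y ((k+1)-1)‖ ≤ αk k * ‖y k - y (k-1)‖ + ‖ζ k - y (k+1)‖ := by
      rw [ey]
      refine le_trans (norm_sub_le _ _) ?_
      rw [norm_smul, Real.norm_eq_abs, abs_of_nonneg (hαk k).1]
    have hαa : αk k * ‖x k - x (k-1)‖ ≤ α * ‖x k - x (k-1)‖ :=
      mul_le_mul_of_nonneg_right (hαk k).2 (norm_nonneg _)
    have hαb : αk k * ‖y k - y (k-1)‖ ≤ α * ‖y k - y (k-1)‖ :=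
      mul_le_mul_of_nonneg_right (hαk k).2 (norm_nonneg _)
    calc ‖x (k+1) - x ((k+1)-1)‖ + ‖y (k+1) - y ((k+1)-1)‖
        ≤ α * ‖x k - x (k-1)‖ + ‖ξ k - x (k+1)‖ + (α * ‖y k - y (k-1)‖ + ‖ζ k - y (k+1)‖) := by
          linarith
    _ = α * (‖x k - x (k-1)‖ + ‖y k - y (k-1)‖) + (‖ξ k - x (k+1)‖ + ‖ζ k - y (k+1)‖) := by
          ring
  have hΔx : Tendsto (fun k => ‖x k - x (k-1)‖) atTop (𝓝 0) :=
    squeeze_zero (fun k => norm_nonneg _) (fun k => by linarith [norm_nonneg (y k - y (k-1))]) hΔ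
  have hΔy : Tendsto (fun k => ‖y k - y (k-1)‖) atTop (𝓝 0) :=
    squeeze_zero (fun k => norm_nonneg _) (fun k => by linarith [norm_nonneg (x k - x (k-1))]) hΔ
  have hΔx1 : Tendsto (fun k => ‖x (k+1) - x k‖) atTop (𝓝 0) := by
    have := hΔx.comp (tendsto_add_atTop_nat 1)
    simpa [Function.comp_def] using this
  have hΔy1 : Tendsto (fun k => ‖y (k+1) - y k‖) atTop (𝓝 0) := by
    have := hΔy.comp (tendsto_add_atTop_nat 1)
    simpa [Function.comp_def] using this
  -- boundedness and a convergent subsequence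
  obtain ⟨xbar, ybar, κ, hκat, hxκ, hyκ⟩ :
      ∃ (xbar : EuclideanSpace ℝ (Fin n)) (ybar : EuclideanSpace ℝ (Fin m)) (κ : ℕ → ℕ),
        Tendsto κ atTop atTop ∧ Tendsto (fun j => x (κ j)) atTop (𝓝 xbar) ∧
        Tendsto (fun j => y (κ j)) atTop (𝓝 ybar) := by
    obtain ⟨B, hB⟩ := hL0.bddAbove_range
    have hBnn : 0 ≤ B := le_trans (hMF'0 _ _) (hB ⟨0, rfl⟩)
    have hxin : ∀ k, x k ∈ Metric.closedBall xs0 (Real.sqrt (B/δ)) := by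
      intro k
      have h1 : δ*(‖x k - xs0‖^2 + ‖y k - ys0‖^2) ≤ B :=
        le_trans (hMF'low _ _) (hB ⟨k, rfl⟩)
      rw [Metric.mem_closedBall, dist_eq_norm]
      rw [Real.le_sqrt (norm_nonneg _) (div_nonneg hBnn hδ.le), le_div_iff₀ hδ, mul_comm]
      nlinarith [sq_nonneg ‖y k - ys0‖]
    have hyin : ∀ k, y k ∈ Metric.closedBall ys0 (Real.sqrt (B/δ)) := by
      intro k
      have h1 : δ*(‖x k - xs0‖^2 + ‖y k - ys0‖^2) ≤ B :=
        le_trans (hMF'low _ _) (hB ⟨k, rfl⟩)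
      rw [Metric.mem_closedBall, dist_eq_norm]
      rw [Real.le_sqrt (norm_nonneg _) (div_nonneg hBnn hδ.le), le_div_iff₀ hδ, mul_comm]
      nlinarith [sq_nonneg ‖x k - xs0‖]
    obtain ⟨xbar, -, κ1, hκ1, hκ1t⟩ :=
      tendsto_subseq_of_bounded Metric.isBounded_closedBall hxin
    obtain ⟨ybar, -, κ2, hκ2, hκ2t⟩ :=
      tendsto_subseq_of_bounded (x := fun j => y (κ1 j)) Metric.isBounded_closedBall
        (fun j => hyin (κ1 j))
    exact ⟨xbar, ybar, κ1 ∘ κ2, (hκ1.comp hκ2).tendsto_atTop,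
      hκ1t.comp hκ2.tendsto_atTop, hκ2t⟩
  -- auxiliary limits along the subsequence
  have hx1κ : Tendsto (fun j => x (κ j + 1)) atTop (𝓝 xbar) := by
    have hd : Tendsto (fun j => x (κ j + 1) - x (κ j)) atTop (𝓝 0) :=
      tendsto_zero_iff_norm_tendsto_zero.2 (hΔx1.comp hκat)
    have := hxκ.add hd
    simpa using this
  have hy1κ : Tendsto (fun j => y (κ j + 1)) atTop (𝓝 ybar) := by
    have hd : Tendsto (fun j => y (κ j + 1) - y (κ j)) atTop (𝓝 0) :=
      tendsto_zero_iff_norm_tendsto_zero.2 (hΔy1.comp hκat)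
    have := hyκ.add hd
    simpa using this
  have hsmx : Tendsto (fun k => αk k • (x k - x (k-1))) atTop (𝓝 0) := by
    apply squeeze_zero_norm (fun k => ?_) (by simpa using hΔx.const_mul α)
    rw [norm_smul, Real.norm_eq_abs, abs_of_nonneg (hαk k).1]
    exact mul_le_mul_of_nonneg_right (hαk k).2 (norm_nonneg _)
  have hsmy : Tendsto (fun k => αk k • (y k - y (k-1))) atTop (𝓝 0) := by
    apply squeeze_zero_norm (fun k => ?_) (by simpa using hΔy.const_mul α)
    rw [norm_smul, Real.norm_eq_abs, abs_of_nonneg (hαk k).1]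
    exact mul_le_mul_of_nonneg_right (hαk k).2 (norm_nonneg _)
  have hξκ : Tendsto (fun j => ξ (κ j)) atTop (𝓝 xbar) := by
    have h := hxκ.add (hsmx.comp hκat)
    rw [add_zero] at h
    exact h.congr (fun j => (hξ (κ j)).symm)
  have hζκ : Tendsto (fun j => ζ (κ j)) atTop (𝓝 ybar) := by
    have h := hyκ.add (hsmy.comp hκat)
    rw [add_zero] at h
    exact h.congr (fun j => (hζ (κ j)).symm)
  -- continuity facts
  have hGC : Continuous G := by
    rw [← continuousOn_univ]
    exact hG.continuousOn isOpen_univ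
  have hFsC : Continuous Fs := by
    rw [← continuousOn_univ]
    exact hFs.continuousOn isOpen_univ
  obtain ⟨εD, hεD, hεDb⟩ := posdef_inner_lower hD.inv
  obtain ⟨εE, hεE, hεEb⟩ := posdef_inner_lower hE.inv
  have hQlip : ∀ x1 x2, ‖gQ x1 - gQ x2‖ ≤ (1/εD) * ‖x1 - x2‖ := by
    intro x1 x2
    have h1 := hQcoco x1 x2
    have h2 := hεDb (gQ x1 - gQ x2)
    have h3 := real_inner_le_norm (gQ x1 - gQ x2) (x1 - x2)
    by_cases hg : gQ x1 - gQ x2 = 0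
    · rw [hg, norm_zero]; positivity
    · have hgn : 0 < ‖gQ x1 - gQ x2‖ := norm_pos_iff.2 hg
      have h4 : εD * ‖gQ x1 - gQ x2‖ ≤ ‖x1 - x2‖ := by nlinarith
      have h5 := mul_le_mul_of_nonneg_left h4 (le_of_lt (one_div_pos.2 hεD))
      rw [← mul_assoc, one_div_mul_cancel hεD.ne', one_mul] at h5
      exact h5
  have hPlip : ∀ y1 y2, ‖gP y1 - gP y2‖ ≤ (1/εE) * ‖y1 - y2‖ := by
    intro y1 y2
    have h1 := hPcoco y1 y2
    have h2 := hεEb (gP y1 - gP y2)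
    have h3 := real_inner_le_norm (gP y1 - gP y2) (y1 - y2)
    by_cases hg : gP y1 - gP y2 = 0
    · rw [hg, norm_zero]; positivity
    · have hgn : 0 < ‖gP y1 - gP y2‖ := norm_pos_iff.2 hg
      have h4 : εE * ‖gP y1 - gP y2‖ ≤ ‖y1 - y2‖ := by nlinarith
      have h5 := mul_le_mul_of_nonneg_left h4 (le_of_lt (one_div_pos.2 hεE))
      rw [← mul_assoc, one_div_mul_cancel hεE.ne', one_mul] at h5
      exact h5
  have hgQκ : Tendsto (fun j => gQ (ξ (κ j))) atTop (𝓝 (gQ xbar)) := by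
    rw [tendsto_iff_norm_sub_tendsto_zero]
    apply squeeze_zero (fun j => norm_nonneg _) (fun j => hQlip _ _)
    simpa using (tendsto_iff_norm_sub_tendsto_zero.1 hξκ).const_mul (1/εD)
  have hgPκ : Tendsto (fun j => gP (ζ (κ j))) atTop (𝓝 (gP ybar)) := by
    rw [tendsto_iff_norm_sub_tendsto_zero]
    apply squeeze_zero (fun j => norm_nonneg _) (fun j => hPlip _ _)
    simpa using (tendsto_iff_norm_sub_tendsto_zero.1 hζκ).const_mul (1/εE)
  have hwxv : Tendsto (fun k => ξ k - x (k+1)) atTop (𝓝 0) :=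
    tendsto_zero_iff_norm_tendsto_zero.2 hwx
  have hwyv : Tendsto (fun k => ζ k - y (k+1)) atTop (𝓝 0) :=
    tendsto_zero_iff_norm_tendsto_zero.2 hwy
  -- the subsequential limit is a saddle point
  have hsxbar : -(gQ xbar + Matrix.toEuclideanLin Kmatᵀ ybar) ∈ subdiff G xbar := by
    intro z
    have hTcont : Continuous (Matrix.toEuclideanLin (T⁻¹ : Matrix (Fin n) (Fin n) ℝ)) :=
      LinearMap.continuous_of_finiteDimensional _
    have hKTcont : Continuous (Matrix.toEuclideanLin Kmatᵀ) :=
      LinearMap.continuous_of_finiteDimensional _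
    have hTw : Tendsto (fun j => Matrix.toEuclideanLin T⁻¹ (ξ (κ j) - x (κ j + 1)))
        atTop (𝓝 0) := by
      have h := (hTcont.tendsto 0).comp (hwxv.comp hκat)
      rw [map_zero] at h
      exact h
    have hKζ : Tendsto (fun j => Matrix.toEuclideanLin Kmatᵀ (ζ (κ j)))
        atTop (𝓝 (Matrix.toEuclideanLin Kmatᵀ ybar)) :=
      (hKTcont.tendsto _).comp hζκ
    have huj : Tendsto (fun j => Matrix.toEuclideanLin T⁻¹ (ξ (κ j) - x (κ j + 1))
          - gQ (ξ (κ j)) - Matrix.toEuclideanLin Kmatᵀ (ζ (κ j)))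
        atTop (𝓝 (0 - gQ xbar - Matrix.toEuclideanLin Kmatᵀ ybar)) :=
      (hTw.sub hgQκ).sub hKζ
    have hlhs : Tendsto (fun j => G (x (κ j + 1))
          + ⟪Matrix.toEuclideanLin T⁻¹ (ξ (κ j) - x (κ j + 1)) - gQ (ξ (κ j))
              - Matrix.toEuclideanLin Kmatᵀ (ζ (κ j)), z - x (κ j + 1)⟫)
        atTop (𝓝 (G xbar + ⟪(0:EuclideanSpace ℝ (Fin n)) - gQ xbar
            - Matrix.toEuclideanLin Kmatᵀ ybar, z - xbar⟫)) :=
      ((hGC.tendsto _).comp hx1κ).add (huj.inner (tendsto_const_nhds.sub hx1κ))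
    have hle := le_of_tendsto hlhs (Filter.Eventually.of_forall (fun j => hxstep (κ j) z))
    have he : (0:EuclideanSpace ℝ (Fin n)) - gQ xbar - Matrix.toEuclideanLin Kmatᵀ ybar
        = -(gQ xbar + Matrix.toEuclideanLin Kmatᵀ ybar) := by abel
    rw [he] at hle
    exact hle
  have hsybar : Matrix.toEuclideanLin Kmat xbar - gP ybar ∈ subdiff Fs ybar := by
    intro z
    have hScont : Continuous (Matrix.toEuclideanLin (Sig⁻¹ : Matrix (Fin m) (Fin m) ℝ)) :=
      LinearMap.continuous_of_finiteDimensional _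
    have hKcont : Continuous (Matrix.toEuclideanLin Kmat) :=
      LinearMap.continuous_of_finiteDimensional _
    have hSw : Tendsto (fun j => Matrix.toEuclideanLin Sig⁻¹ (ζ (κ j) - y (κ j + 1)))
        atTop (𝓝 0) := by
      have h := (hScont.tendsto 0).comp (hwyv.comp hκat)
      rw [map_zero] at h
      exact h
    have harg : Tendsto (fun j => (2:ℝ) • x (κ j + 1) - ξ (κ j))
        atTop (𝓝 ((2:ℝ) • xbar - xbar)) :=
      (hx1κ.const_smul (2:ℝ)).sub hξκ
    have hKarg : Tendsto (fun j => Matrix.toEuclideanLin Kmat ((2:ℝ) • x (κ j + 1) - ξ (κ j)))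
        atTop (𝓝 (Matrix.toEuclideanLin Kmat ((2:ℝ) • xbar - xbar))) :=
      (hKcont.tendsto _).comp harg
    have hvj : Tendsto (fun j => Matrix.toEuclideanLin Sig⁻¹ (ζ (κ j) - y (κ j + 1))
          - gP (ζ (κ j)) + Matrix.toEuclideanLin Kmat ((2:ℝ) • x (κ j + 1) - ξ (κ j)))
        atTop (𝓝 (0 - gP ybar + Matrix.toEuclideanLin Kmat ((2:ℝ) • xbar - xbar))) :=
      (hSw.sub hgPκ).add hKarg
    have hlhs : Tendsto (fun j => Fs (y (κ j + 1))
          + ⟪Matrix.toEuclideanLin Sig⁻¹ (ζ (κ j) - y (κ j + 1)) - gP (ζ (κ j))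
              + Matrix.toEuclideanLin Kmat ((2:ℝ) • x (κ j + 1) - ξ (κ j)), z - y (κ j + 1)⟫)
        atTop (𝓝 (Fs ybar + ⟪(0:EuclideanSpace ℝ (Fin m)) - gP ybar
            + Matrix.toEuclideanLin Kmat ((2:ℝ) • xbar - xbar), z - ybar⟫)) :=
      ((hFsC.tendsto _).comp hy1κ).add (hvj.inner (tendsto_const_nhds.sub hy1κ))
    have hle := le_of_tendsto hlhs (Filter.Eventually.of_forall (fun j => hystep (κ j) z))
    have he2 : (2:ℝ) • xbar - xbar = xbar := by module
    rw [he2] at hle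
    have he : (0:EuclideanSpace ℝ (Fin m)) - gP ybar + Matrix.toEuclideanLin Kmat xbar
        = Matrix.toEuclideanLin Kmat xbar - gP ybar := by abel
    rw [he] at hle
    exact hle
  -- conclude convergence of the whole sequence
  obtain ⟨⟨L1, hL1⟩, -⟩ := master xbar ybar hsxbar hsybar
  have hL1z : L1 = 0 := by
    have hκφ : Tendsto (fun j => MFq T⁻¹ Sig⁻¹ Kmat (x (κ j) - xbar) (y (κ j) - ybar))
        atTop (𝓝 L1) := hL1.comp hκat
    have h1 : Tendsto (fun j => ‖x (κ j) - xbar‖) atTop (𝓝 0) :=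
      tendsto_iff_norm_sub_tendsto_zero.1 hxκ
    have h2 : Tendsto (fun j => ‖y (κ j) - ybar‖) atTop (𝓝 0) :=
      tendsto_iff_norm_sub_tendsto_zero.1 hyκ
    have h1' : Tendsto (fun j => ‖x (κ j) - xbar‖^2) atTop (𝓝 0) := by
      have := h1.mul h1
      rw [mul_zero] at this
      exact this.congr (fun j => (pow_two _).symm)
    have h2' : Tendsto (fun j => ‖y (κ j) - ybar‖^2) atTop (𝓝 0) := by
      have := h2.mul h2
      rw [mul_zero] at this
      exact this.congr (fun j => (pow_two _).symm)
    have hg : Tendsto (fun j => C * (‖x (κ j) - xbar‖^2 + ‖y (κ j) - ybar‖^2))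
        atTop (𝓝 0) := by
      have := (h1'.add h2').const_mul C
      simpa using this
    have h0 : Tendsto (fun j => MFq T⁻¹ Sig⁻¹ Kmat (x (κ j) - xbar) (y (κ j) - ybar))
        atTop (𝓝 0) :=
      squeeze_zero (fun j => hMF'0 _ _) (fun j => hCb _ _) hg
    exact tendsto_nhds_unique hκφ h0
  rw [hL1z] at hL1
  have hxlim : Tendsto x atTop (𝓝 xbar) := by
    rw [tendsto_iff_norm_sub_tendsto_zero]
    have hsq : Tendsto (fun k => ‖x k - xbar‖^2) atTop (𝓝 0) := by
      apply squeeze_zero (fun k => sq_nonneg _) (fun k => ?_)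
        (by simpa only [zero_div] using hL1.div_const δ)
      rw [le_div_iff₀ hδ, mul_comm]
      refine le_trans ?_ (hMF'low _ _)
      nlinarith [sq_nonneg ‖y k - ybar‖, hδ.le]
    have h3 := hsq.sqrt
    rw [Real.sqrt_zero] at h3
    exact h3.congr (fun k => Real.sqrt_sq (norm_nonneg _))
  have hylim : Tendsto y atTop (𝓝 ybar) := by
    rw [tendsto_iff_norm_sub_tendsto_zero]
    have hsq : Tendsto (fun k => ‖y k - ybar‖^2) atTop (𝓝 0) := by
      apply squeeze_zero (fun k => sq_nonneg _) (fun k => ?_)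
        (by simpa only [zero_div] using hL1.div_const δ)
      rw [le_div_iff₀ hδ, mul_comm]
      refine le_trans ?_ (hMF'low _ _)
      nlinarith [sq_nonneg ‖x k - xbar‖, hδ.le]
    have h3 := hsq.sqrt
    rw [Real.sqrt_zero] at h3
    exact h3.congr (fun k => Real.sqrt_sq (norm_nonneg _))
  exact ⟨xbar, ybar, ⟨hsxbar, hsybar⟩, hxlim, hylim⟩
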